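/- (Theorem: comparable implies preceding, α = π/4) Let u, v ∈ Sym(n) with u <_B v in the Bruhat order. Then for every y ∈ [0, h_n] there holds H(B_n(u), y) ≤ H(B_n(v), y), where H(B, y) is the x-coordinate of the unique point on the border B with y-coordinate y. -/

import Mathlib

open Real Finset

/-- The underlying vector β_n^k(α). -/
noncomputable def beta (n : ℕ) (α : ℝ) (k : ℕ) : ℝ × ℝ :=
  (-(Real.cos (((k : ℝ) - 1) * (Real.pi - 2 * α) / ((n : ℝ) - 1) + α)),
    Real.sin (((k : ℝ) - 1) * (Real.pi - 2 * α) / ((n : ℝ) - 1) + α))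

/-- Coxeter length of a permutation = number of inversions. -/
def invLen {n : ℕ} (w : Equiv.Perm (Fin n)) : ℕ :=
  ((Finset.univ : Finset (Fin n × Fin n)).filter (fun p => p.1 < p.2 ∧ w p.2 < w p.1)).card

/-- The c-th vertex (partial sum of the first c edge vectors) of the border of w. -/
noncomputable def vert (n : ℕ) (α : ℝ) (w : Equiv.Perm (Fin n)) (c : ℕ) : ℝ × ℝ :=
  ∑ i ∈ Finset.univ.filter (fun i : Fin n => (i : ℕ) < c), beta n α ((w⁻¹ i).val + 1)

/-- The border of w: the piecewise-linear path from the origin. -/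
noncomputable def border (n : ℕ) (α : ℝ) (w : Equiv.Perm (Fin n)) : Set (ℝ × ℝ) :=
  ⋃ i ∈ Finset.range n, segment ℝ (vert n α w i) (vert n α w (i + 1))

/-- The strong Bruhat order: transitive extension of w <_B wt when ℓ(wt) = ℓ(w) + 1. -/
def BruhatLt {n : ℕ} (u v : Equiv.Perm (Fin n)) : Prop :=
  Relation.TransGen
    (fun x y => (∃ a b : Fin n, a ≠ b ∧ y = Equiv.swap a b * x) ∧ invLen y = invLen x + 1) u v

noncomputable def th (n k : ℕ) : ℝ :=
  ((k : ℝ) - 1) * (Real.pi - 2 * (Real.pi / 4)) / ((n : ℝ) - 1) + Real.pi / 4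

lemma beta_eq (n k : ℕ) : beta n (Real.pi / 4) k = (-Real.cos (th n k), Real.sin (th n k)) := rfl

lemma edge_facts {x : ℝ} (h1 : Real.pi / 4 ≤ x) (h2 : x ≤ 3 * Real.pi / 4) :
    Real.sqrt 2 / 2 ≤ Real.sin x ∧ |Real.cos x| ≤ Real.sqrt 2 / 2 := by
  have hpi := Real.pi_pos
  constructor
  · rw [← Real.cos_pi_div_two_sub x, ← Real.cos_abs]
    have habs : |Real.pi / 2 - x| ≤ Real.pi / 4 := by
      rw [abs_le]; constructor <;> linarith
    calc Real.sqrt 2 / 2 = Real.cos (Real.pi / 4) := Real.cos_pi_div_four.symm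
      _ ≤ Real.cos |Real.pi / 2 - x| :=
        Real.cos_le_cos_of_nonneg_of_le_pi (abs_nonneg _) (by linarith) habs
  · rw [abs_le]
    constructor
    · have h3 : Real.cos (3 * Real.pi / 4) ≤ Real.cos x :=
        Real.cos_le_cos_of_nonneg_of_le_pi (by linarith) (by linarith) h2
      have : Real.cos (3 * Real.pi / 4) = -(Real.sqrt 2 / 2) := by
        rw [show (3 * Real.pi / 4) = Real.pi - Real.pi / 4 by ring, Real.cos_pi_sub,
          Real.cos_pi_div_four]
      linarith
    · have h3 : Real.cos x ≤ Real.cos (Real.pi / 4) :=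
        Real.cos_le_cos_of_nonneg_of_le_pi (by linarith) (by linarith) h1
      rw [Real.cos_pi_div_four] at h3; exact h3

lemma pair_facts {x y : ℝ} (h1 : Real.pi / 4 ≤ x) (hxy : x ≤ y) (h2 : y ≤ 3 * Real.pi / 4) :
    Real.cos y ≤ Real.cos x ∧ Real.sin y + Real.cos y ≤ Real.sin x + Real.cos x ∧
      Real.sin x - Real.cos x ≤ Real.sin y - Real.cos y ∧
      0 ≤ Real.sin y * Real.cos x - Real.cos y * Real.sin x := by
  have hpi := Real.pi_pos
  have hs2 : (0:ℝ) < Real.sqrt 2 / 2 := by positivity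
  refine ⟨Real.cos_le_cos_of_nonneg_of_le_pi (by linarith) (by linarith) hxy, ?_, ?_, ?_⟩
  · have hmono : Real.cos (y - Real.pi / 4) ≤ Real.cos (x - Real.pi / 4) :=
      Real.cos_le_cos_of_nonneg_of_le_pi (by linarith) (by linarith) (by linarith)
    rw [Real.cos_sub, Real.cos_sub, Real.cos_pi_div_four, Real.sin_pi_div_four] at hmono
    nlinarith [hmono, hs2]
  · have hmono : Real.cos (3 * Real.pi / 4 - x) ≤ Real.cos (3 * Real.pi / 4 - y) :=
      Real.cos_le_cos_of_nonneg_of_le_pi (by linarith) (by linarith) (by linarith)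
    have e : ∀ z : ℝ, Real.cos (3 * Real.pi / 4 - z)
        = Real.sqrt 2 / 2 * (Real.sin z - Real.cos z) := by
      intro z
      rw [Real.cos_sub, show (3 * Real.pi / 4) = Real.pi - Real.pi / 4 by ring,
        Real.cos_pi_sub, Real.sin_pi_sub, Real.cos_pi_div_four, Real.sin_pi_div_four]
      ring
    rw [e x, e y] at hmono
    nlinarith [hmono, hs2]
  · have := Real.sin_nonneg_of_nonneg_of_le_pi (by linarith : (0:ℝ) ≤ y - x) (by linarith)
    rw [Real.sin_sub] at this; linarith

lemma th_bounds {n : ℕ} (hn : 2 ≤ n) {j : ℕ} (hj : j < n) :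
    Real.pi / 4 ≤ th n (j + 1) ∧ th n (j + 1) ≤ 3 * Real.pi / 4 := by
  have hpi := Real.pi_pos
  have hn1 : (1:ℝ) ≤ (n:ℝ) - 1 := by
    have : (2:ℝ) ≤ (n:ℝ) := by exact_mod_cast hn
    linarith
  have hj0 : (0:ℝ) ≤ (j:ℝ) := Nat.cast_nonneg j
  have hjn : (j:ℝ) ≤ (n:ℝ) - 1 := by
    have : (j:ℝ) + 1 ≤ (n:ℝ) := by exact_mod_cast hj
    linarith
  have hnum : ((j + 1 : ℕ) : ℝ) - 1 = (j:ℝ) := by push_cast; ring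
  unfold th
  rw [hnum]
  constructor
  · have : 0 ≤ (j:ℝ) * (Real.pi - 2 * (Real.pi / 4)) / ((n:ℝ) - 1) := by
      apply div_nonneg _ (by linarith)
      nlinarith
    linarith
  · have hle : (j:ℝ) * (Real.pi - 2 * (Real.pi / 4)) / ((n:ℝ) - 1) ≤ Real.pi / 2 := by
      rw [div_le_iff₀ (by linarith : (0:ℝ) < (n:ℝ) - 1)]
      nlinarith
    linarith

lemma th_mono {n : ℕ} (hn : 2 ≤ n) {j k : ℕ} (hjk : j ≤ k) : th n (j + 1) ≤ th n (k + 1) := by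
  have hpi := Real.pi_pos
  have hn1 : (1:ℝ) ≤ (n:ℝ) - 1 := by
    have : (2:ℝ) ≤ (n:ℝ) := by exact_mod_cast hn
    linarith
  have hjk' : (j:ℝ) ≤ (k:ℝ) := by exact_mod_cast hjk
  unfold th
  have h1 : ((j + 1 : ℕ) : ℝ) - 1 = (j:ℝ) := by push_cast; ring
  have h2 : ((k + 1 : ℕ) : ℝ) - 1 = (k:ℝ) := by push_cast; ring
  rw [h1, h2]
  have hC : (0:ℝ) ≤ Real.pi - 2 * (Real.pi / 4) := by nlinarith
  gcongr

lemma vert_zero (n : ℕ) (α : ℝ) (w : Equiv.Perm (Fin n)) : vert n α w 0 = 0 := by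
  unfold vert
  rw [Finset.filter_false_of_mem, Finset.sum_empty]
  intro i _; omega

lemma vert_succ (n : ℕ) (α : ℝ) (w : Equiv.Perm (Fin n)) {c : ℕ} (hc : c < n) :
    vert n α w (c + 1) = vert n α w c + beta n α ((w⁻¹ ⟨c, hc⟩).val + 1) := by
  unfold vert
  have hins : Finset.univ.filter (fun i : Fin n => (i : ℕ) < c + 1)
      = insert ⟨c, hc⟩ (Finset.univ.filter (fun i : Fin n => (i : ℕ) < c)) := by
    ext i
    simp only [Finset.mem_filter, Finset.mem_univ, true_and, Finset.mem_insert, Fin.ext_iff]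
    omega
  rw [hins, Finset.sum_insert (by simp)]
  rw [add_comm]

/-- the edge vector of piece `c` -/
noncomputable def edg (n : ℕ) (w : Equiv.Perm (Fin n)) (c : ℕ) (hc : c < n) : ℝ × ℝ :=
  beta n (Real.pi / 4) ((w⁻¹ ⟨c, hc⟩).val + 1)

lemma edg_props {n : ℕ} (hn : 2 ≤ n) (w : Equiv.Perm (Fin n)) {c : ℕ} (hc : c < n) :
    Real.sqrt 2 / 2 ≤ (edg n w c hc).2 ∧ |(edg n w c hc).1| ≤ (edg n w c hc).2 := by
  have hb := th_bounds hn (j := (w⁻¹ ⟨c, hc⟩).val) (Fin.is_lt _)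
  have he := edge_facts hb.1 hb.2
  have hs2 : (0:ℝ) < Real.sqrt 2 / 2 := by positivity
  unfold edg
  rw [beta_eq]
  refine ⟨he.1, ?_⟩
  rw [abs_neg]
  calc |Real.cos (th n ((w⁻¹ ⟨c, hc⟩).val + 1))| ≤ Real.sqrt 2 / 2 := he.2
    _ ≤ _ := he.1

lemma vert_grow {n : ℕ} (hn : 2 ≤ n) (w : Equiv.Perm (Fin n)) {c d : ℕ} (hcd : c ≤ d)
    (hd : d ≤ n) :
    (vert n (Real.pi / 4) w c).2 ≤ (vert n (Real.pi / 4) w d).2 ∧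
      |(vert n (Real.pi / 4) w d).1 - (vert n (Real.pi / 4) w c).1| ≤
        (vert n (Real.pi / 4) w d).2 - (vert n (Real.pi / 4) w c).2 := by
  induction d with
  | zero =>
    interval_cases c
    simp
  | succ d ih =>
    rcases Nat.lt_or_ge c (d + 1) with h | h
    · have hdn : d < n := by omega
      obtain ⟨h1, h2⟩ := ih (by omega) (by omega)
      have hv : vert n (Real.pi / 4) w (d + 1) = vert n (Real.pi / 4) w d + edg n w d hdn :=
        vert_succ n _ w hdn
      obtain ⟨he1, he2⟩ := edg_props hn w hdn
      have hs2 : (0:ℝ) < Real.sqrt 2 / 2 := by positivity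
      rw [hv]
      rw [abs_le] at he2 ⊢
      rw [abs_le] at h2
      simp only [Prod.fst_add, Prod.snd_add]
      refine ⟨by linarith, by constructor <;> linarith⟩
    · have : c = d + 1 := by omega
      subst this
      simp

lemma border_rep {n : ℕ} {w : Equiv.Perm (Fin n)} {p : ℝ × ℝ}
    (hp : p ∈ border n (Real.pi / 4) w) :
    ∃ c : ℕ, ∃ hc : c < n, ∃ t : ℝ, 0 ≤ t ∧ t ≤ 1 ∧
      p = vert n (Real.pi / 4) w c + t • edg n w c hc := by
  unfold border at hp
  simp only [Set.mem_iUnion, Finset.mem_range] at hp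
  obtain ⟨c, hc, hseg⟩ := hp
  rw [segment_eq_image] at hseg
  obtain ⟨t, ⟨ht0, ht1⟩, hpt⟩ := hseg
  refine ⟨c, hc, t, ht0, ht1, ?_⟩
  rw [← hpt, vert_succ n _ w hc]
  show _ = _ + t • beta n (Real.pi / 4) _
  match p1 : vert n (Real.pi / 4) w c, p2 : beta n (Real.pi / 4) ((w⁻¹ ⟨c, hc⟩).val + 1) with
  | v, e => module

lemma rep_mem {n : ℕ} (w : Equiv.Perm (Fin n)) {c : ℕ} (hc : c < n) {t : ℝ}
    (ht0 : 0 ≤ t) (ht1 : t ≤ 1) :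
    vert n (Real.pi / 4) w c + t • edg n w c hc ∈ border n (Real.pi / 4) w := by
  unfold border
  simp only [Set.mem_iUnion, Finset.mem_range]
  refine ⟨c, hc, ?_⟩
  rw [segment_eq_image, vert_succ n _ w hc]
  refine ⟨t, ⟨ht0, ht1⟩, ?_⟩
  show _ = _ + t • beta n (Real.pi / 4) _
  module

lemma rep_snd {n : ℕ} (w : Equiv.Perm (Fin n)) {c : ℕ} (hc : c < n) (t : ℝ) :
    (vert n (Real.pi / 4) w c + t • edg n w c hc).2
      = (vert n (Real.pi / 4) w c).2 + t * (edg n w c hc).2 := rfl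

lemma rep_fst {n : ℕ} (w : Equiv.Perm (Fin n)) {c : ℕ} (hc : c < n) (t : ℝ) :
    (vert n (Real.pi / 4) w c + t • edg n w c hc).1
      = (vert n (Real.pi / 4) w c).1 + t * (edg n w c hc).1 := rfl

lemma lip_aux {n : ℕ} (hn : 2 ≤ n) (w : Equiv.Perm (Fin n)) {c d : ℕ} (hc : c < n) (hd : d < n)
    {t s : ℝ} (ht0 : 0 ≤ t) (ht1 : t ≤ 1) (hs0 : 0 ≤ s) (hs1 : s ≤ 1) (hcd : c ≤ d) :
    |(vert n (Real.pi / 4) w c + t • edg n w c hc).1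
        - (vert n (Real.pi / 4) w d + s • edg n w d hd).1|
      ≤ |(vert n (Real.pi / 4) w c + t • edg n w c hc).2
        - (vert n (Real.pi / 4) w d + s • edg n w d hd).2| := by
  have hs2 : (0:ℝ) < Real.sqrt 2 / 2 := by positivity
  obtain ⟨hec2, hec1⟩ := edg_props hn w hc
  obtain ⟨hed2, hed1⟩ := edg_props hn w hd
  rcases Nat.eq_or_lt_of_le hcd with rfl | hlt
  · simp only [Prod.fst_add, Prod.snd_add, Prod.smul_fst, Prod.smul_snd, smul_eq_mul]
    have h1 : (vert n (Real.pi/4) w c).1 + t * (edg n w c hc).1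
        - ((vert n (Real.pi/4) w c).1 + s * (edg n w c hd).1) = (t - s) * (edg n w c hc).1 := by
      have : edg n w c hd = edg n w c hc := rfl
      rw [this]; ring
    have h2 : (vert n (Real.pi/4) w c).2 + t * (edg n w c hc).2
        - ((vert n (Real.pi/4) w c).2 + s * (edg n w c hd).2) = (t - s) * (edg n w c hc).2 := by
      have : edg n w c hd = edg n w c hc := rfl
      rw [this]; ring
    rw [h1, h2, abs_mul, abs_mul]
    have hone : |(edg n w c hc).2| = (edg n w c hc).2 := abs_of_nonneg (by linarith)
    rw [hone]
    exact mul_le_mul_of_nonneg_left hec1 (abs_nonneg _)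
  · -- c < d
    have h1d : c + 1 ≤ d := hlt
    obtain ⟨hg1, hg2⟩ := vert_grow hn w h1d (le_of_lt hd)
    have hvc : vert n (Real.pi/4) w (c+1) = vert n (Real.pi/4) w c + edg n w c hc :=
      vert_succ n _ w hc
    set P := vert n (Real.pi/4) w c + t • edg n w c hc with hP
    set Q := vert n (Real.pi/4) w d + s • edg n w d hd with hQ
    have e1 : |(vert n (Real.pi/4) w (c+1)).1 - P.1| ≤ (vert n (Real.pi/4) w (c+1)).2 - P.2 := by
      rw [hvc, hP]
      simp only [Prod.fst_add, Prod.snd_add, Prod.smul_fst, Prod.smul_snd, smul_eq_mul]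
      have : (vert n (Real.pi/4) w c).1 + (edg n w c hc).1
          - ((vert n (Real.pi/4) w c).1 + t * (edg n w c hc).1) = (1 - t) * (edg n w c hc).1 := by
        ring
      rw [this, abs_mul, abs_of_nonneg (by linarith)]
      have := mul_le_mul_of_nonneg_left hec1 (by linarith : (0:ℝ) ≤ 1 - t)
      calc (1-t) * |(edg n w c hc).1| ≤ (1-t) * (edg n w c hc).2 := this
        _ = _ := by ring
    have e2 : |Q.1 - (vert n (Real.pi/4) w d).1| ≤ Q.2 - (vert n (Real.pi/4) w d).2 := by
      rw [hQ]
      simp only [Prod.fst_add, Prod.snd_add, Prod.smul_fst, Prod.smul_snd, smul_eq_mul]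
      have : (vert n (Real.pi/4) w d).1 + s * (edg n w d hd).1 - (vert n (Real.pi/4) w d).1
          = s * (edg n w d hd).1 := by ring
      rw [this, abs_mul, abs_of_nonneg hs0]
      have := mul_le_mul_of_nonneg_left hed1 hs0
      calc s * |(edg n w d hd).1| ≤ s * (edg n w d hd).2 := this
        _ = _ := by ring
    -- combine
    have tri : |P.1 - Q.1| ≤ |P.1 - (vert n (Real.pi/4) w (c+1)).1|
        + |(vert n (Real.pi/4) w (c+1)).1 - (vert n (Real.pi/4) w d).1|
        + |(vert n (Real.pi/4) w d).1 - Q.1| := by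
      calc |P.1 - Q.1| ≤ |P.1 - (vert n (Real.pi/4) w (c+1)).1|
            + |(vert n (Real.pi/4) w (c+1)).1 - Q.1| := abs_sub_le _ _ _
        _ ≤ _ := by
            have := abs_sub_le (vert n (Real.pi/4) w (c+1)).1 (vert n (Real.pi/4) w d).1 Q.1
            linarith
    rw [abs_sub_comm] at e1
    rw [abs_sub_comm (vert n (Real.pi/4) w d).1 Q.1] at tri
    have hd2 : |(vert n (Real.pi/4) w (c+1)).1 - (vert n (Real.pi/4) w d).1|
        ≤ (vert n (Real.pi/4) w d).2 - (vert n (Real.pi/4) w (c+1)).2 := by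
      rw [abs_sub_comm]; exact hg2
    have hPQ : P.2 ≤ Q.2 := by
      have hP2 : P.2 ≤ (vert n (Real.pi/4) w (c+1)).2 := by
        rw [hvc, hP]
        simp only [Prod.fst_add, Prod.snd_add, Prod.smul_fst, Prod.smul_snd, smul_eq_mul]
        nlinarith
      have hQ2 : (vert n (Real.pi/4) w d).2 ≤ Q.2 := by
        rw [hQ]; simp only [Prod.fst_add, Prod.snd_add, Prod.smul_fst, Prod.smul_snd, smul_eq_mul]; nlinarith
      linarith
    have hP2 : P.2 ≤ (vert n (Real.pi/4) w (c+1)).2 := by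
      rw [hvc, hP]; simp only [Prod.fst_add, Prod.snd_add, Prod.smul_fst, Prod.smul_snd, smul_eq_mul]; nlinarith
    have hQ2 : (vert n (Real.pi/4) w d).2 ≤ Q.2 := by
      rw [hQ]; simp only [Prod.fst_add, Prod.snd_add, Prod.smul_fst, Prod.smul_snd, smul_eq_mul]; nlinarith
    have habs : |P.1 - Q.1| ≤ Q.2 - P.2 := by
      calc |P.1 - Q.1| ≤ _ := tri
        _ ≤ Q.2 - P.2 := by linarith
    rw [abs_sub_comm P.2 Q.2, abs_of_nonneg (by linarith : (0:ℝ) ≤ Q.2 - P.2)]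
    exact habs

lemma border_lip {n : ℕ} (hn : 2 ≤ n) (w : Equiv.Perm (Fin n)) {p q : ℝ × ℝ}
    (hp : p ∈ border n (Real.pi / 4) w) (hq : q ∈ border n (Real.pi / 4) w) :
    |p.1 - q.1| ≤ |p.2 - q.2| := by
  obtain ⟨c, hc, t, ht0, ht1, rfl⟩ := border_rep hp
  obtain ⟨d, hd, s, hs0, hs1, rfl⟩ := border_rep hq
  rcases le_total c d with h | h
  · exact lip_aux hn w hc hd ht0 ht1 hs0 hs1 h
  · rw [abs_sub_comm, abs_sub_comm ((vert n (Real.pi / 4) w c + t • edg n w c hc).2)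
      ((vert n (Real.pi / 4) w d + s • edg n w d hd).2)]
    exact lip_aux hn w hd hc hs0 hs1 ht0 ht1 h

lemma vert_top {n : ℕ} (w : Equiv.Perm (Fin n)) :
    (vert n (Real.pi / 4) w n).2 = ∑ j : Fin n, Real.sin (th n (j.val + 1)) := by
  unfold vert
  have hfilt : Finset.univ.filter (fun i : Fin n => (i : ℕ) < n) = Finset.univ := by
    ext i; simp [Fin.is_lt]
  rw [hfilt]
  have hsnd : (∑ i : Fin n, beta n (Real.pi / 4) ((w⁻¹ i).val + 1)).2
      = ∑ i : Fin n, (beta n (Real.pi / 4) ((w⁻¹ i).val + 1)).2 := by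
    exact map_sum (AddMonoidHom.snd ℝ ℝ) _ _
  rw [hsnd]
  have : ∀ i : Fin n, (beta n (Real.pi / 4) ((w⁻¹ i).val + 1)).2
      = Real.sin (th n ((w⁻¹ i).val + 1)) := fun i => by rw [beta_eq]
  rw [Finset.sum_congr rfl (fun i _ => this i)]
  exact Equiv.sum_comp w⁻¹ (fun j => Real.sin (th n (j.val + 1)))

lemma border_snd_bounds {n : ℕ} (hn : 2 ≤ n) (w : Equiv.Perm (Fin n)) {p : ℝ × ℝ}
    (hp : p ∈ border n (Real.pi / 4) w) :
    0 ≤ p.2 ∧ p.2 ≤ (vert n (Real.pi / 4) w n).2 := by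
  obtain ⟨c, hc, t, ht0, ht1, rfl⟩ := border_rep hp
  obtain ⟨he2, _⟩ := edg_props hn w hc
  have hs2 : (0:ℝ) < Real.sqrt 2 / 2 := by positivity
  have h0 := (vert_grow hn w (Nat.zero_le c) (le_of_lt hc)).1
  rw [vert_zero] at h0
  have hcn := (vert_grow hn w (Nat.succ_le_of_lt hc) (le_refl n)).1
  have hsucc : vert n (Real.pi/4) w (c+1) = vert n (Real.pi/4) w c + edg n w c hc :=
    vert_succ n _ w hc
  simp only [Prod.fst_add, Prod.snd_add, Prod.smul_fst, Prod.smul_snd, smul_eq_mul]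
  have h02 : (0:ℝ×ℝ).2 = 0 := rfl
  rw [h02] at h0
  constructor
  · nlinarith
  · rw [hsucc] at hcn
    simp only [Prod.snd_add] at hcn
    nlinarith

lemma border_surj {n : ℕ} (hn : 2 ≤ n) (w : Equiv.Perm (Fin n)) :
    ∀ c, c ≤ n → ∀ y : ℝ, 0 ≤ y → y ≤ (vert n (Real.pi / 4) w c).2 →
      ∃ r ∈ border n (Real.pi / 4) w, r.2 = y := by
  intro c
  induction c with
  | zero =>
    intro _ y h0 h1
    rw [vert_zero] at h1
    have h02 : ((0:ℝ×ℝ)).2 = 0 := rfl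
    rw [h02] at h1
    have hy : y = 0 := le_antisymm h1 h0
    have h0n : 0 < n := by omega
    refine ⟨vert n (Real.pi/4) w 0 + (0:ℝ) • edg n w 0 h0n, rep_mem w h0n le_rfl zero_le_one, ?_⟩
    simp [vert_zero, hy]
  | succ c ih =>
    intro hc y h0 h1
    have hcn : c < n := by omega
    by_cases hy : y ≤ (vert n (Real.pi/4) w c).2
    · exact ih (by omega) y h0 hy
    · push_neg at hy
      obtain ⟨he2, _⟩ := edg_props hn w hcn
      have hs2 : (0:ℝ) < Real.sqrt 2 / 2 := by positivity
      have hsucc : vert n (Real.pi/4) w (c+1) = vert n (Real.pi/4) w c + edg n w c hcn :=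
        vert_succ n _ w hcn
      rw [hsucc] at h1
      simp only [Prod.snd_add] at h1
      set t : ℝ := (y - (vert n (Real.pi/4) w c).2) / (edg n w c hcn).2 with htdef
      have hepos : (0:ℝ) < (edg n w c hcn).2 := by linarith
      have ht0 : 0 ≤ t := div_nonneg (by linarith) (by linarith)
      have ht1 : t ≤ 1 := by
        rw [div_le_one hepos]; linarith
      refine ⟨vert n (Real.pi/4) w c + t • edg n w c hcn, rep_mem w hcn ht0 ht1, ?_⟩
      show (vert n (Real.pi/4) w c).2 + t * (edg n w c hcn).2 = y
      rw [htdef]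
      field_simp
      ring

section SwapLemmas

variable {n : ℕ} (u : Equiv.Perm (Fin n)) (a b : Fin n)

lemma swap_inv_apply (i : Fin n) :
    (Equiv.swap a b * u)⁻¹ i = u⁻¹ (Equiv.swap a b i) := by
  simp [mul_inv_rev, Equiv.swap_inv, Equiv.Perm.mul_apply]

lemma vert_swap_low {α : ℝ} (hab : a < b) {c : ℕ} (hc : c ≤ a.val) :
    vert n α (Equiv.swap a b * u) c = vert n α u c := by
  have hab' : (a:ℕ) < (b:ℕ) := hab
  unfold vert
  apply Finset.sum_congr rfl
  intro i hi
  rw [Finset.mem_filter] at hi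
  have hia : i ≠ a := by
    intro h; subst h; omega
  have hib : i ≠ b := by
    intro h; subst h; omega
  rw [swap_inv_apply, Equiv.swap_apply_of_ne_of_ne hia hib]

lemma vert_swap_high {α : ℝ} (hab : a < b) {c : ℕ} (hc : b.val < c) :
    vert n α (Equiv.swap a b * u) c = vert n α u c := by
  have hab' : (a:ℕ) < (b:ℕ) := hab
  unfold vert
  apply Finset.sum_equiv (Equiv.swap a b)
  · intro i
    simp only [Finset.mem_filter, Finset.mem_univ, true_and]
    rcases eq_or_ne i a with rfl | hia
    · rw [Equiv.swap_apply_left]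
      omega
    · rcases eq_or_ne i b with rfl | hib
      · rw [Equiv.swap_apply_right]
        omega
      · rw [Equiv.swap_apply_of_ne_of_ne hia hib]
  · intro i _
    rw [swap_inv_apply]

lemma vert_swap_mid {α : ℝ} (hab : a < b) {c : ℕ} (h1 : a.val < c) (h2 : c ≤ b.val) :
    vert n α (Equiv.swap a b * u) c
      = vert n α u c + (beta n α ((u⁻¹ b).val + 1) - beta n α ((u⁻¹ a).val + 1)) := by
  have ha : a ∈ Finset.univ.filter (fun i : Fin n => (i : ℕ) < c) := by
    simp [h1]
  have herase : ∀ i ∈ (Finset.univ.filter (fun i : Fin n => (i : ℕ) < c)).erase a,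
      (Equiv.swap a b * u)⁻¹ i = u⁻¹ i := by
    intro i hi
    rw [Finset.mem_erase, Finset.mem_filter] at hi
    have hib : i ≠ b := by
      intro h; subst h; omega
    rw [swap_inv_apply, Equiv.swap_apply_of_ne_of_ne hi.1 hib]
  have e1 : vert n α (Equiv.swap a b * u) c
      = beta n α ((u⁻¹ b).val + 1)
        + ∑ i ∈ (Finset.univ.filter (fun i : Fin n => (i : ℕ) < c)).erase a,
            beta n α ((u⁻¹ i).val + 1) := by
    unfold vert
    rw [← Finset.add_sum_erase _ _ ha]
    congr 1
    · rw [swap_inv_apply, Equiv.swap_apply_left]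
    · apply Finset.sum_congr rfl
      intro i hi
      rw [herase i hi]
  have e2 : vert n α u c
      = beta n α ((u⁻¹ a).val + 1)
        + ∑ i ∈ (Finset.univ.filter (fun i : Fin n => (i : ℕ) < c)).erase a,
            beta n α ((u⁻¹ i).val + 1) := by
    unfold vert
    rw [← Finset.add_sum_erase _ _ ha]
  rw [e1, e2]
  abel

lemma edg_swap {c : ℕ} (hc : c < n) (hca : c ≠ a.val) (hcb : c ≠ b.val) :
    edg n (Equiv.swap a b * u) c hc = edg n u c hc := by
  unfold edg
  rw [swap_inv_apply, Equiv.swap_apply_of_ne_of_ne]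
  · exact fun h => hca (congrArg Fin.val h)
  · exact fun h => hcb (congrArg Fin.val h)

end SwapLemmas

lemma aux_nonneg {a b : ℝ} (h : 0 ≤ a * b) (hb : 0 < b) : 0 ≤ a := by
  nlinarith [h, hb]

set_option maxHeartbeats 1000000 in
lemma cov_prec {n : ℕ} (hn : 2 ≤ n) (u : Equiv.Perm (Fin n)) (a b : Fin n) (hab : a < b)
    (hk : (u⁻¹ a : Fin n) ≤ u⁻¹ b) :
    ∀ p ∈ border n (Real.pi / 4) u, ∀ q ∈ border n (Real.pi / 4) (Equiv.swap a b * u),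
      p.2 = q.2 → p.1 ≤ q.1 := by
  intro p hp q hq hpq
  set v := Equiv.swap a b * u with hv
  have hab' : (a:ℕ) < (b:ℕ) := hab
  obtain ⟨c, hc, t, ht0, ht1, hpr⟩ := border_rep hp
  obtain ⟨d, hd, s, hs0, hs1, hqr⟩ := border_rep hq
  set A := th n ((u⁻¹ a).val + 1) with hAdef
  set B := th n ((u⁻¹ b).val + 1) with hBdef
  have hAB : A ≤ B := th_mono hn hk
  have hAb := th_bounds hn (j := (u⁻¹ a).val) (Fin.is_lt _)
  have hBb := th_bounds hn (j := (u⁻¹ b).val) (Fin.is_lt _)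
  obtain ⟨pf1, pf2, pf3, pf4⟩ := pair_facts hAb.1 hAB hBb.2
  obtain ⟨efA1, efA2⟩ := edge_facts hAb.1 hAb.2
  obtain ⟨efB1, efB2⟩ := edge_facts hBb.1 hBb.2
  have hs2 : (0:ℝ) < Real.sqrt 2 / 2 := by positivity
  set cA := Real.cos A
  set sA := Real.sin A
  set cB := Real.cos B
  set sB := Real.sin B
  have hsA0 : 0 < sA := lt_of_lt_of_le hs2 efA1
  have hsB0 : 0 < sB := lt_of_lt_of_le hs2 efB1
  have hcAsA : cA ≤ sA := le_trans (le_of_abs_le efA2) efA1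
  have hcAsA' : -sA ≤ cA := by
    have := neg_abs_le cA; have h2 := le_trans efA2 efA1; linarith [abs_nonneg cA, neg_le_of_abs_le efA2]
  have hcBsB : cB ≤ sB := le_trans (le_of_abs_le efB2) efB1
  have hcBsB' : -sB ≤ cB := by
    linarith [neg_le_of_abs_le efB2, le_trans efB2 efB1]
  have hbetaA : beta n (Real.pi/4) ((u⁻¹ a).val + 1) = (-cA, sA) := beta_eq n _
  have hbetaB : beta n (Real.pi/4) ((u⁻¹ b).val + 1) = (-cB, sB) := beta_eq n _
  clear_value A B cA sA cB sB
  -- Case 1: shared piece of u (below a or above b)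
  by_cases hcs : c < a.val ∨ b.val < c
  · have hvert : vert n (Real.pi/4) v c = vert n (Real.pi/4) u c := by
      rcases hcs with h | h
      · exact vert_swap_low u a b hab (by omega)
      · exact vert_swap_high u a b hab h
    have hedg : edg n v c hc = edg n u c hc := by
      apply edg_swap
      · omega
      · omega
    have hmem : p ∈ border n (Real.pi/4) v := by
      rw [hpr, ← hvert, ← hedg]
      exact rep_mem v hc ht0 ht1
    have hl := border_lip hn v hmem hq
    rw [hpq, sub_self, abs_zero] at hl
    have := le_of_abs_le hl
    linarith
  by_cases hds : d < a.val ∨ b.val < d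
  · have hvert : vert n (Real.pi/4) v d = vert n (Real.pi/4) u d := by
      rcases hds with h | h
      · exact vert_swap_low u a b hab (by omega)
      · exact vert_swap_high u a b hab h
    have hedg : edg n v d hd = edg n u d hd := by
      apply edg_swap
      · omega
      · omega
    have hmem : q ∈ border n (Real.pi/4) u := by
      rw [hqr, hvert, hedg]
      exact rep_mem u hd hs0 hs1
    have hl := border_lip hn u hp hmem
    rw [hpq, sub_self, abs_zero] at hl
    have := le_of_abs_le hl
    linarith
  push_neg at hcs hds
  set D : ℝ × ℝ := ((-cB, sB) : ℝ × ℝ) - ((-cA, sA) : ℝ × ℝ) with hDdef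
  have hD1 : D.1 = cA - cB := by simp [hDdef]; ring
  have hD2 : D.2 = sB - sA := rfl
  have hD1nn : 0 ≤ D.1 := by rw [hD1]; linarith
  have hD2abs : |D.2| ≤ D.1 := by
    rw [hD1, hD2, abs_le]; constructor <;> linarith
  -- Case 3: middle piece of u
  by_cases hcm : a.val < c ∧ c < b.val
  · have hkey : vert n (Real.pi/4) v c + t • edg n v c hc = p + D := by
      rw [hpr, hv, vert_swap_mid u a b hab hcm.1 (by omega),
        edg_swap u a b hc (by omega) (by omega), hbetaA, hbetaB]
      module
    have hmem : p + D ∈ border n (Real.pi/4) v := by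
      rw [← hkey]; exact rep_mem v hc ht0 ht1
    have hl := le_of_abs_le (border_lip hn v hmem hq)
    have h2 : (p + D).2 - q.2 = D.2 := by
      rw [Prod.snd_add, hpq]; ring
    rw [h2, Prod.fst_add] at hl
    have := le_of_abs_le hD2abs
    linarith [hl, hD2abs, le_abs_self D.2]
  -- Case 4: middle piece of v
  by_cases hdm : a.val < d ∧ d < b.val
  · have hkey : vert n (Real.pi/4) u d + s • edg n u d hd = q - D := by
      rw [hqr, hv, vert_swap_mid u a b hab hdm.1 (by omega),
        edg_swap u a b hd (by omega) (by omega), hbetaA, hbetaB]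
      module
    have hmem : q - D ∈ border n (Real.pi/4) u := by
      rw [← hkey]; exact rep_mem u hd hs0 hs1
    have hl := le_of_abs_le (border_lip hn u hp hmem)
    have h2 : p.2 - (q - D).2 = D.2 := by
      rw [Prod.snd_sub, hpq]; ring
    rw [h2, Prod.fst_sub] at hl
    linarith [hl, hD2abs, le_abs_self D.2]
  -- Corners
  have hcc : c = a.val ∨ c = b.val := by omega
  have hdd : d = a.val ∨ d = b.val := by omega
  have havn : a.val < n := a.isLt
  have hbvn : b.val < n := b.isLt
  set P := vert n (Real.pi/4) u a.val with hPdef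
  set Q := vert n (Real.pi/4) u (b.val + 1) with hQdef
  have hedguA : ∀ h : a.val < n, edg n u a.val h = (-cA, sA) := by
    intro h; unfold edg; rw [Fin.eta, hbetaA]
  have hedguB : ∀ h : b.val < n, edg n u b.val h = (-cB, sB) := by
    intro h; unfold edg; rw [Fin.eta, hbetaB]
  have hedgvA : ∀ h : a.val < n, edg n v a.val h = (-cB, sB) := by
    intro h; unfold edg
    rw [hv, swap_inv_apply, Fin.eta, Equiv.swap_apply_left, hbetaB]
  have hedgvB : ∀ h : b.val < n, edg n v b.val h = (-cA, sA) := by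
    intro h; unfold edg
    rw [hv, swap_inv_apply, Fin.eta, Equiv.swap_apply_right, hbetaA]
  have hPA : vert n (Real.pi/4) u (a.val + 1) = P + (-cA, sA) := by
    rw [hPdef, vert_succ n _ u havn, Fin.eta, hbetaA]
  have hQu : Q = vert n (Real.pi/4) u b.val + (-cB, sB) := by
    rw [hQdef, vert_succ n _ u hbvn, Fin.eta, hbetaB]
  have hPv : vert n (Real.pi/4) v a.val = P := by
    rw [hv, hPdef]; exact vert_swap_low u a b hab le_rfl
  have hQv : vert n (Real.pi/4) v (b.val + 1) = Q := by
    rw [hv, hQdef]; exact vert_swap_high u a b hab (by omega)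
  have hQv2 : Q = vert n (Real.pi/4) v b.val + (-cA, sA) := by
    rw [← hQv, vert_succ n _ v hbvn]
    congr 1
    rw [hv, swap_inv_apply, Fin.eta, Equiv.swap_apply_right, hbetaA]
  obtain ⟨G1, G2⟩ := vert_grow hn u (show a.val + 1 ≤ b.val by omega) (le_of_lt hbvn)
  rw [hPA] at G1 G2
  have hub1 : (vert n (Real.pi/4) u b.val).1 = Q.1 + cB := by
    rw [hQu]; simp
  have hub2 : (vert n (Real.pi/4) u b.val).2 = Q.2 - sB := by
    rw [hQu]; simp [Prod.snd_add]
  rw [hub2] at G1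
  rw [hub1, hub2] at G2
  simp only [Prod.fst_add, Prod.snd_add] at G1 G2
  have hm1 : P.2 + sA ≤ Q.2 - sB := by convert G1 using 2 <;> rfl
  have hm2 := abs_le.mp G2
  clear_value P Q
  -- component formulas for p and q in each corner
  rcases hcc with hcav | hcbv
  · -- c = a.val : p = P + t•(-cA,sA)
    subst hcav
    rw [hedguA hc] at hpr
    have hp1 : p.1 = P.1 + t * -cA := by rw [hpr, hPdef]; rfl
    have hp2 : p.2 = P.2 + t * sA := by rw [hpr, hPdef]; rfl
    rcases hdd with hdav | hdbv
    · -- d = a.val : q = P + s•(-cB,sB)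
      subst hdav
      rw [hedgvA hd, hPv] at hqr
      have hq1 : q.1 = P.1 + s * -cB := by rw [hqr]; rfl
      have hq2 : q.2 = P.2 + s * sB := by rw [hqr]; rfl
      rw [hp2, hq2] at hpq
      have heq : t * sA = s * sB := by linarith
      have heqc : (t * sA) * cB = (s * sB) * cB := by rw [heq]
      have key : s * cB * sB ≤ t * cA * sB := by
        linarith only [mul_nonneg ht0 pf4, heqc]
      have h9 : 0 ≤ (t * cA - s * cB) * sB := by linarith only [key]
      have h10 := aux_nonneg h9 hsB0
      rw [hp1, hq1]
      linarith only [h10]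
    · -- d = b.val : q = (Q - (-cA,sA)) + s•(-cA,sA)
      subst hdbv
      rw [hedgvB hd] at hqr
      have hvb1 : (vert n (Real.pi/4) v b.val).1 = Q.1 + cA := by
        rw [hQv2]; show _ = ((vert n (Real.pi/4) v b.val).1 + -cA) + cA; ring
      have hvb2 : (vert n (Real.pi/4) v b.val).2 = Q.2 - sA := by
        rw [hQv2]; show _ = ((vert n (Real.pi/4) v b.val).2 + sA) - sA; ring
      have hq1 : q.1 = Q.1 + cA + s * -cA := by
        rw [hqr]; show (vert n (Real.pi/4) v b.val).1 + s * -cA = _; rw [hvb1]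
      have hq2 : q.2 = Q.2 - sA + s * sA := by
        rw [hqr]; show (vert n (Real.pi/4) v b.val).2 + s * sA = _; rw [hvb2]
      rw [hp2, hq2] at hpq
      have heq : Q.2 - P.2 = (t + 1 - s) * sA := by linarith
      set m : ℝ := (Q.2 - sB) - (P.2 + sA) with hmdef
      set x : ℝ := (Q.1 + cB) - (P.1 - cA) with hxdef
      have hmnn : 0 ≤ m := by rw [hmdef]; linarith
      have hxm1 : -m ≤ x := by rw [hmdef, hxdef]; linarith [hm2.1]
      have hxm2 : x ≤ m := by rw [hmdef, hxdef]; linarith [hm2.2]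
      have hcon : m ≤ sA - sB := by
        have h2sA : Q.2 - P.2 ≤ 2 * sA := by
          rw [heq]
          have hts : t + 1 - s ≤ 2 := by linarith only [ht1, hs0]
          linarith only [mul_le_mul_of_nonneg_right hts hsA0.le]
        rw [hmdef]; linarith
      have hQ1x : Q.1 - P.1 = x - cA - cB := by rw [hxdef]; ring
      have hQ2m : Q.2 - P.2 = sA + m + sB := by rw [hmdef]; ring
      clear_value m x
      have h_1 : 0 ≤ (x + m) * sA := mul_nonneg (by linarith) (le_of_lt hsA0)
      have h_2 : 0 ≤ (sA - sB - m) * (sA - cA) := mul_nonneg (by linarith) (by linarith)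
      have h_3 : 0 ≤ sA * ((sB - cB) - (sA - cA)) := mul_nonneg (le_of_lt hsA0) (by linarith)
      have key : 0 ≤ (Q.1 - P.1) * sA + (Q.2 - P.2) * cA := by
        rw [hQ1x, hQ2m]
        linarith only [h_1, h_2, h_3]
      have heqc : (Q.2 - P.2) * cA = ((t + 1 - s) * sA) * cA := by rw [heq]
      have h9 : 0 ≤ ((Q.1 - P.1) + (t + 1 - s) * cA) * sA := by
        linarith only [key, heqc]
      have h10 := aux_nonneg h9 hsA0
      rw [hp1, hq1]
      linarith only [h10]
  · -- c = b.val : p = (Q - (-cB,sB)) + t•(-cB,sB)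
    subst hcbv
    rw [hedguB hc] at hpr
    have hp1 : p.1 = Q.1 + cB + t * -cB := by
      rw [hpr]; show (vert n (Real.pi/4) u b.val).1 + t * -cB = _; rw [hub1]
    have hp2 : p.2 = Q.2 - sB + t * sB := by
      rw [hpr]; show (vert n (Real.pi/4) u b.val).2 + t * sB = _; rw [hub2]
    rcases hdd with hdav | hdbv
    · -- d = a.val : q = P + s•(-cB,sB)
      subst hdav
      rw [hedgvA hd, hPv] at hqr
      have hq1 : q.1 = P.1 + s * -cB := by rw [hqr]; rfl
      have hq2 : q.2 = P.2 + s * sB := by rw [hqr]; rfl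
      rw [hp2, hq2] at hpq
      have heq : Q.2 - P.2 = (1 - t + s) * sB := by linarith
      set m : ℝ := (Q.2 - sB) - (P.2 + sA) with hmdef
      set x : ℝ := (Q.1 + cB) - (P.1 - cA) with hxdef
      have hmnn : 0 ≤ m := by rw [hmdef]; linarith
      have hxm1 : -m ≤ x := by rw [hmdef, hxdef]; linarith [hm2.1]
      have hxm2 : x ≤ m := by rw [hmdef, hxdef]; linarith [hm2.2]
      have hcon : m ≤ sB - sA := by
        have h2sB : Q.2 - P.2 ≤ 2 * sB := by
          rw [heq]
          have hts : 1 - t + s ≤ 2 := by linarith only [ht0, hs1]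
          linarith only [mul_le_mul_of_nonneg_right hts hsB0.le]
        rw [hmdef]; linarith
      have hQ1x : Q.1 - P.1 = x - cA - cB := by rw [hxdef]; ring
      have hQ2m : Q.2 - P.2 = sA + m + sB := by rw [hmdef]; ring
      clear_value m x
      have g_1 : 0 ≤ (m - x) * sB := mul_nonneg (by linarith) (le_of_lt hsB0)
      have g_2 : 0 ≤ (sB - sA - m) * (sB + cB) := mul_nonneg (by linarith) (by linarith)
      have g_3 : 0 ≤ sB * ((sA + cA) - (sB + cB)) := mul_nonneg (le_of_lt hsB0) (by linarith)
      have key : (Q.1 - P.1) * sB + (Q.2 - P.2) * cB ≤ 0 := by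
        rw [hQ1x, hQ2m]
        linarith only [g_1, g_2, g_3]
      have heqc : (Q.2 - P.2) * cB = ((1 - t + s) * sB) * cB := by rw [heq]
      have h9 : 0 ≤ (-(Q.1 - P.1 + (1 - t + s) * cB)) * sB := by
        linarith only [key, heqc]
      have h10 := aux_nonneg h9 hsB0
      rw [hp1, hq1]
      linarith only [h10]
    · -- d = b.val : q = (Q - (-cA,sA)) + s•(-cA,sA)
      subst hdbv
      rw [hedgvB hd] at hqr
      have hvb1 : (vert n (Real.pi/4) v b.val).1 = Q.1 + cA := by
        rw [hQv2]; show _ = ((vert n (Real.pi/4) v b.val).1 + -cA) + cA; ring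
      have hvb2 : (vert n (Real.pi/4) v b.val).2 = Q.2 - sA := by
        rw [hQv2]; show _ = ((vert n (Real.pi/4) v b.val).2 + sA) - sA; ring
      have hq1 : q.1 = Q.1 + cA + s * -cA := by
        rw [hqr]; show (vert n (Real.pi/4) v b.val).1 + s * -cA = _; rw [hvb1]
      have hq2 : q.2 = Q.2 - sA + s * sA := by
        rw [hqr]; show (vert n (Real.pi/4) v b.val).2 + s * sA = _; rw [hvb2]
      rw [hp2, hq2] at hpq
      have heq : (1 - t) * sB = (1 - s) * sA := by linarith
      have heqc : ((1 - t) * sB) * cA = ((1 - s) * sA) * cA := by rw [heq]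
      have key : (1 - t) * cB * sA ≤ (1 - s) * cA * sA := by
        linarith only [mul_nonneg (by linarith only [ht1] : (0:ℝ) ≤ 1 - t) pf4, heqc]
      have h9 : 0 ≤ ((1 - s) * cA - (1 - t) * cB) * sA := by linarith only [key]
      have h10 := aux_nonneg h9 hsA0
      rw [hp1, hq1]
      linarith only [h10]

lemma inv_step {n : ℕ} (w : Equiv.Perm (Fin n)) (a b : Fin n) (hab : a < b)
    (hw : w⁻¹ a < w⁻¹ b) : invLen w + 1 ≤ invLen (Equiv.swap a b * w) := by
  classical
  set i := w⁻¹ a with hi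
  set j := w⁻¹ b with hj
  have hij : i < j := hw
  have hwi : w i = a := by rw [hi]; simp
  have hwj : w j = b := by rw [hj]; simp
  set v := Equiv.swap a b * w with hv
  have hvap : ∀ p, v p = Equiv.swap a b (w p) := fun p => rfl
  have hvi : v i = b := by rw [hvap, hwi, Equiv.swap_apply_left]
  have hvj : v j = a := by rw [hvap, hwj, Equiv.swap_apply_right]
  have hvo : ∀ p, w p ≠ a → w p ≠ b → v p = w p := fun p h1 h2 => by
    rw [hvap, Equiv.swap_apply_of_ne_of_ne h1 h2]
  have hwa : ∀ p, w p = a → p = i := fun p h => by rw [hi, ← h]; simp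
  have hwb : ∀ p, w p = b → p = j := fun p h => by rw [hj, ← h]; simp
  unfold invLen
  set Iw := Finset.univ.filter (fun p : Fin n × Fin n => p.1 < p.2 ∧ w p.2 < w p.1) with hIw
  set Iv := Finset.univ.filter (fun p : Fin n × Fin n => p.1 < p.2 ∧ v p.2 < v p.1) with hIv
  have hnm : (i, j) ∉ Iw := by
    simp only [hIw, Finset.mem_filter, Finset.mem_univ, true_and]
    rintro ⟨-, h2⟩
    rw [hwi, hwj] at h2
    exact absurd h2 (not_lt.mpr hab.le)
  have hcard : (insert (i, j) Iw).card = Iw.card + 1 := Finset.card_insert_of_notMem hnm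
  rw [← hcard]
  apply Finset.card_le_card_of_injOn (fun x =>
    if x.2 = i ∧ a < w x.1 ∧ w x.1 < b then (x.1, j)
    else if x.1 = j ∧ a < w x.2 ∧ w x.2 < b then (i, x.2)
    else x)
  · -- maps into Iv
    rintro ⟨p, q⟩ hx
    simp only []
    rcases Finset.mem_insert.mp hx with heq | hmem
    · rw [Prod.mk.injEq] at heq
      obtain ⟨rfl, rfl⟩ := heq
      rw [if_neg, if_neg]
      · simp only [hIv, Finset.mem_coe, Finset.mem_filter, Finset.mem_univ, true_and]
        exact ⟨hij, by rw [hvi, hvj]; exact hab⟩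
      · rintro ⟨h, -⟩; exact absurd h (ne_of_lt hij)
      · rintro ⟨h, -⟩; exact absurd h (ne_of_gt hij)
    · simp only [hIw, Finset.mem_filter, Finset.mem_univ, true_and] at hmem
      obtain ⟨hpq, hinv⟩ := hmem
      simp only [hIv, Finset.mem_coe, Finset.mem_filter, Finset.mem_univ, true_and]
      split_ifs with h1 h2
      · -- (p, j)
        refine ⟨lt_trans (h1.1 ▸ hpq) hij, ?_⟩
        rw [hvj, hvo p (ne_of_gt h1.2.1) (ne_of_lt h1.2.2)]
        exact h1.2.1
      · -- (i, q)
        refine ⟨lt_of_lt_of_le hij (le_of_lt (h2.1 ▸ hpq)), ?_⟩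
        rw [hvi, hvo q (ne_of_gt h2.2.1) (ne_of_lt h2.2.2)]
        exact h2.2.2
      · refine ⟨hpq, ?_⟩
        by_cases hqa : w q = a
        · have hq_i : q = i := hwa q hqa
          have hpa : a < w p := hqa ▸ hinv
          have hpb : ¬ w p < b := fun hlt => h1 ⟨hq_i, hpa, hlt⟩
          have hpneb : w p ≠ b := by
            intro h
            have hpj := hwb p h
            rw [hq_i, hpj] at hpq
            exact absurd (hpq.trans hij) (lt_irrefl _)
          have hbp : b < w p := lt_of_le_of_ne (not_lt.mp hpb) (Ne.symm hpneb)
          rw [hvo p (ne_of_gt hpa) hpneb, hq_i, hvi]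
          exact hbp
        · by_cases hqb : w q = b
          · have hq_j := hwb q hqb
            have hbp : b < w p := hqb ▸ hinv
            rw [hvo p (ne_of_gt (hab.trans hbp)) (ne_of_gt hbp), hq_j, hvj]
            exact hab.trans hbp
          · have hvq : v q = w q := hvo q hqa hqb
            by_cases hpa : w p = a
            · have hp_i := hwa p hpa
              rw [hvq, hp_i, hvi]
              exact (hpa ▸ hinv).trans hab
            · by_cases hpb : w p = b
              · have hp_j := hwb p hpb
                have hqlt : ¬ a < w q := fun h => h2 ⟨hp_j, h, hpb ▸ hinv⟩
                rw [hvq, hp_j, hvj]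
                exact lt_of_le_of_ne (not_lt.mp hqlt) hqa
              · rw [hvq, hvo p hpa hpb]
                exact hinv
  · -- injective
    rintro ⟨p, q⟩ hx ⟨p', q'⟩ hy hfeq
    simp only [Finset.coe_insert, Set.mem_insert_iff, Finset.mem_coe] at hx hy
    have hxS : (p, q) = (i, j) ∨ (p < q ∧ w q < w p) := by
      rcases hx with h | h
      · exact Or.inl h
      · right; simpa [hIw] using h
    have hyS : (p', q') = (i, j) ∨ (p' < q' ∧ w q' < w p') := by
      rcases hy with h | h
      · exact Or.inl h
      · right; simpa [hIw] using h
    simp only [] at hfeq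
    split_ifs at hfeq with h1 h3 h2 h4 h5 h6 h7 h8 h9
    · -- b1 b1
      rw [Prod.mk.injEq] at hfeq ⊢
      exact ⟨hfeq.1, h1.1.trans h3.1.symm⟩
    · -- b1 b2
      exfalso
      rw [Prod.mk.injEq] at hfeq
      rcases hxS with hx' | ⟨hpq, hinvx⟩
      · rw [Prod.mk.injEq] at hx'
        exact absurd (hx'.2.symm.trans h1.1) (ne_of_gt hij)
      · have hpi : p < i := by rw [← h1.1]; exact hpq
        rw [hfeq.1] at hpi
        exact lt_irrefl i hpi
    · -- b1 b3
      exfalso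
      rw [Prod.mk.injEq] at hfeq
      rcases hxS with hx' | ⟨hpq, hinvx⟩
      · rw [Prod.mk.injEq] at hx'
        exact absurd (hx'.2.symm.trans h1.1) (ne_of_gt hij)
      · rcases hyS with hy' | ⟨hpq', hinvy⟩
        · rw [Prod.mk.injEq] at hy'
          have hpi : p < i := by rw [← h1.1]; exact hpq
          rw [hfeq.1, hy'.1] at hpi
          exact lt_irrefl i hpi
        · have hbp : b < w p' := by rw [← hwj, hfeq.2]; exact hinvy
          rw [← hfeq.1] at hbp
          exact absurd h1.2.2 (not_lt.mpr hbp.le)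
    · -- b2 b1
      exfalso
      rw [Prod.mk.injEq] at hfeq
      rcases hxS with hx' | ⟨hpq, hinvx⟩
      · rw [Prod.mk.injEq] at hx'
        exact absurd (hx'.1.symm.trans h4.1) (ne_of_lt hij)
      · have hjq : j < q := by rw [← h4.1]; exact hpq
        rw [hfeq.2] at hjq
        exact lt_irrefl j hjq
    · -- b2 b2
      rw [Prod.mk.injEq] at hfeq ⊢
      exact ⟨h4.1.trans h6.1.symm, hfeq.2⟩
    · -- b2 b3
      exfalso
      rw [Prod.mk.injEq] at hfeq
      rcases hxS with hx' | ⟨hpq, hinvx⟩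
      · rw [Prod.mk.injEq] at hx'
        exact absurd (hx'.1.symm.trans h4.1) (ne_of_lt hij)
      · rcases hyS with hy' | ⟨hpq', hinvy⟩
        · rw [Prod.mk.injEq] at hy'
          have hpj : p < j := by rw [← hy'.2, ← hfeq.2]; exact hpq
          rw [h4.1] at hpj
          exact lt_irrefl j hpj
        · have hqa : w q' < a := by rw [← hwi, hfeq.1]; exact hinvy
          rw [← hfeq.2] at hqa
          exact absurd h4.2.1 (not_lt.mpr hqa.le)
    · -- b3 b1
      exfalso
      rw [Prod.mk.injEq] at hfeq
      rcases hyS with hy' | ⟨hpq', hinvy⟩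
      · rw [Prod.mk.injEq] at hy'
        exact absurd (hy'.2.symm.trans h7.1) (ne_of_gt hij)
      · rcases hxS with hx' | ⟨hpq, hinvx⟩
        · rw [Prod.mk.injEq] at hx'
          have hpi : p' < i := by rw [← h7.1]; exact hpq'
          rw [← hfeq.1, hx'.1] at hpi
          exact lt_irrefl i hpi
        · have hbp : b < w p := by rw [← hwj, ← hfeq.2]; exact hinvx
          rw [hfeq.1] at hbp
          exact absurd h7.2.2 (not_lt.mpr hbp.le)
    · -- b3 b2
      exfalso
      rw [Prod.mk.injEq] at hfeq
      rcases hxS with hx' | ⟨hpq, hinvx⟩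
      · rw [Prod.mk.injEq] at hx'
        rcases hyS with hy' | ⟨hpq', hinvy⟩
        · rw [Prod.mk.injEq] at hy'
          exact absurd (hy'.1.symm.trans h8.1) (ne_of_lt hij)
        · have hjq : j < q' := by rw [← h8.1]; exact hpq'
          rw [← hfeq.2, hx'.2] at hjq
          exact lt_irrefl j hjq
      · have hqa : w q < a := by rw [← hwi, ← hfeq.1]; exact hinvx
        rw [hfeq.2] at hqa
        exact absurd h8.2.1 (not_lt.mpr hqa.le)
    · -- b3 b3
      exact hfeq


lemma step_prec_aux {n : ℕ} (hn : 2 ≤ n) (x : Equiv.Perm (Fin n)) (a b : Fin n) (hab : a < b)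
    (hlen : invLen (Equiv.swap a b * x) = invLen x + 1) :
    ∀ p ∈ border n (Real.pi / 4) x, ∀ q ∈ border n (Real.pi / 4) (Equiv.swap a b * x),
      p.2 = q.2 → p.1 ≤ q.1 := by
  have hdir : (x⁻¹ a : Fin n) ≤ x⁻¹ b := by
    by_contra hcon
    push_neg at hcon
    set y := Equiv.swap a b * x with hy
    have h1 : y⁻¹ a < y⁻¹ b := by
      have hya : y⁻¹ a = x⁻¹ b := by
        rw [hy, swap_inv_apply, Equiv.swap_apply_left]
      have hyb : y⁻¹ b = x⁻¹ a := by
        rw [hy, swap_inv_apply, Equiv.swap_apply_right]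
      rw [hya, hyb]; exact hcon
    have h2 := inv_step y a b hab h1
    have h3 : Equiv.swap a b * y = x := by
      rw [hy, ← mul_assoc, Equiv.swap_mul_self, one_mul]
    rw [h3] at h2
    omega
  exact cov_prec hn x a b hab hdir

lemma step_prec {n : ℕ} (hn : 2 ≤ n) (x y : Equiv.Perm (Fin n))
    (h : (∃ a b : Fin n, a ≠ b ∧ y = Equiv.swap a b * x) ∧ invLen y = invLen x + 1) :
    ∀ p ∈ border n (Real.pi / 4) x, ∀ q ∈ border n (Real.pi / 4) y, p.2 = q.2 → p.1 ≤ q.1 := by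
  obtain ⟨⟨a, b, hab, rfl⟩, hlen⟩ := h
  rcases hab.lt_or_gt with hlt | hlt
  · exact step_prec_aux hn x a b hlt hlen
  · rw [Equiv.swap_comm] at hlen ⊢
    exact step_prec_aux hn x b a hlt hlen

/-- Theorem `symmetric`, α = π/4: if u <_B v then B_n(u) ≺ B_n(v), i.e. at every
common height the point of B_n(u) lies weakly to the left of the point of B_n(v). -/
theorem bruhat_lt_implies_precedes {n : ℕ} (hn : 2 ≤ n) (u v : Equiv.Perm (Fin n))
    (huv : BruhatLt u v) :
    ∀ p ∈ border n (Real.pi / 4) u, ∀ q ∈ border n (Real.pi / 4) v,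
      p.2 = q.2 → p.1 ≤ q.1 := by
  induction huv with
  | single h => exact step_prec hn _ _ h
  | @tail w v' hw hstep ih =>
    intro p hp q hq hpq
    have hb := border_snd_bounds hn u hp
    have hT : (vert n (Real.pi / 4) u n).2 = (vert n (Real.pi / 4) w n).2 := by
      rw [vert_top, vert_top]
    obtain ⟨r, hr, hr2⟩ := border_surj hn w n le_rfl p.2 hb.1 (by rw [← hT]; exact hb.2)
    exact le_trans (ih p hp r hr hr2.symm) (step_prec hn _ _ hstep r hr q hq (hr2.trans hpq))
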